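/- For a skew-symmetric 2n×2n matrix A = (a_{i,j}), the Pfaffian Pf(A) = (1/(2^n n!)) Σ_{σ ∈ S_{2n}} sgn(σ) ∏_{i=1}^n a_{σ(2i-1),σ(2i)} satisfies Pf(A)^2 = det(A). -/

import Mathlib

/-- The Pfaffian of a `2n × 2n` matrix over a commutative ring containing `ℚ`:
`Pf(A) = (1/(2^n n!)) Σ_{σ ∈ S_{2n}} sgn(σ) ∏_{i=1}^n a_{σ(2i-1),σ(2i)}`. -/
noncomputable def pfaffian {R : Type*} [CommRing R] [Algebra ℚ R] {n : ℕ}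
    (A : Matrix (Fin (2 * n)) (Fin (2 * n)) R) : R :=
  algebraMap ℚ R (1 / (2 ^ n * n.factorial)) *
    ∑ σ : Equiv.Perm (Fin (2 * n)), ((Equiv.Perm.sign σ : ℤ) : R) *
      ∏ i : Fin n, A (σ ⟨2 * (i : ℕ), by omega⟩) (σ ⟨2 * (i : ℕ) + 1, by omega⟩)


open Matrix Equiv Finset

namespace PfAux

variable {R : Type*} [CommRing R] {n : ℕ}

def p (i : Fin n) : Fin (2*n) := ⟨2*i, by omega⟩
def q (i : Fin n) : Fin (2*n) := ⟨2*i+1, by omega⟩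

def g : Fin n × Fin 2 ≃ Fin (2*n) where
  toFun x := ⟨2*x.1+x.2, by have := x.1.isLt; have := x.2.isLt; omega⟩
  invFun t := (⟨t/2, by have := t.isLt; omega⟩, ⟨t%2, by omega⟩)
  left_inv := by
    rintro ⟨i, r⟩
    have := r.isLt
    refine Prod.ext (Fin.ext ?_) (Fin.ext ?_) <;> simp <;> omega
  right_inv := by
    rintro t
    refine Fin.ext ?_
    simp
    omega

@[simp] lemma g_p (i : Fin n) : g (i, 0) = p i := by
  refine Fin.ext ?_; simp [g, p]

@[simp] lemma g_q (i : Fin n) : g (i, 1) = q i := by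
  refine Fin.ext ?_; simp [g, q]

lemma prod_split {M : Type*} [CommMonoid M] (h : Fin (2*n) → M) :
    ∏ t, h t = ∏ i, h (p i) * h (q i) := by
  rw [← g.prod_comp h, Fintype.prod_prod_type]
  exact Finset.prod_congr rfl fun i _ => by rw [Fin.prod_univ_two, g_p, g_q]

variable (R) in
def pfSum {n : ℕ} (A : Matrix (Fin (2*n)) (Fin (2*n)) R) : R :=
  ∑ σ : Perm (Fin (2*n)), ((Perm.sign σ : ℤ) : R) * ∏ i : Fin n, A (σ (p i)) (σ (q i))

def pairFun (φ : Fin n → Fin (2*n) × Fin (2*n)) : Fin (2*n) → Fin (2*n) :=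
  fun t => if (g.symm t).2 = 0 then (φ (g.symm t).1).1 else (φ (g.symm t).1).2

@[simp] lemma pairFun_p (φ : Fin n → Fin (2*n) × Fin (2*n)) (i : Fin n) :
    pairFun φ (p i) = (φ i).1 := by
  have h : g.symm (p i) = (i, 0) := by rw [← g_p i]; exact g.symm_apply_apply _
  simp [pairFun, h]

@[simp] lemma pairFun_q (φ : Fin n → Fin (2*n) × Fin (2*n)) (i : Fin n) :
    pairFun φ (q i) = (φ i).2 := by
  have h : g.symm (q i) = (i, 1) := by rw [← g_q i]; exact g.symm_apply_apply _
  simp [pairFun, h]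

lemma sum_sign_prod (B : Matrix (Fin (2*n)) (Fin (2*n)) R) (f : Fin (2*n) → Fin (2*n)) :
    ∑ σ : Perm (Fin (2*n)), ((Perm.sign σ : ℤ) : R) * ∏ t, B (f t) (σ t)
      = (B.submatrix f id).det := by
  rw [← det_transpose, det_apply']
  exact Finset.sum_congr rfl fun σ _ => rfl

theorem pfSum_conj (A B : Matrix (Fin (2*n)) (Fin (2*n)) R) :
    pfSum R (Bᵀ * A * B) = B.det * pfSum R A := by
  have entry : ∀ u v, (Bᵀ * A * B) u v
      = ∑ kl : Fin (2*n) × Fin (2*n), A kl.1 kl.2 * B kl.1 u * B kl.2 v := by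
    intro u v
    simp only [Matrix.mul_apply, transpose_apply, Finset.sum_mul, Fintype.sum_prod_type]
    rw [Finset.sum_comm]
    exact Finset.sum_congr rfl fun k _ => Finset.sum_congr rfl fun l _ => by ring
  calc pfSum R (Bᵀ * A * B)
      = ∑ σ : Perm (Fin (2*n)), ((Perm.sign σ : ℤ) : R) *
          ∑ φ : Fin n → Fin (2*n) × Fin (2*n),
            ∏ i, (A (φ i).1 (φ i).2 * B (φ i).1 (σ (p i)) * B (φ i).2 (σ (q i))) := by
        refine Finset.sum_congr rfl fun σ _ => ?_
        congr 1
        simp only [entry]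
        rw [Finset.prod_univ_sum]
        simp [Fintype.piFinset_univ]
    _ = ∑ φ : Fin n → Fin (2*n) × Fin (2*n),
          (∏ i, A (φ i).1 (φ i).2) *
            ∑ σ : Perm (Fin (2*n)), ((Perm.sign σ : ℤ) : R) * ∏ t, B (pairFun φ t) (σ t) := by
        simp only [Finset.mul_sum]
        rw [Finset.sum_comm]
        refine Finset.sum_congr rfl fun φ _ => ?_
        refine Finset.sum_congr rfl fun σ _ => ?_
        rw [prod_split (fun t => B (pairFun φ t) (σ t))]
        simp only [pairFun_p, pairFun_q, Finset.prod_mul_distrib]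
        ring
    _ = ∑ φ : Fin n → Fin (2*n) × Fin (2*n),
          (∏ i, A (φ i).1 (φ i).2) * (B.submatrix (pairFun φ) id).det := by
        refine Finset.sum_congr rfl fun φ _ => ?_
        rw [sum_sign_prod]
    _ = ∑ φ : Fin n → Fin (2*n) × Fin (2*n) with Function.Bijective (pairFun φ),
          (∏ i, A (φ i).1 (φ i).2) * (B.submatrix (pairFun φ) id).det := by
        refine (Finset.sum_subset (filter_subset _ _) fun φ _ hφ => ?_).symm
        have hnb : ¬ Function.Bijective (pairFun φ) := by
          simpa only [true_and, mem_filter, mem_univ] using hφ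
        have hni : ¬ Function.Injective (pairFun φ) := fun h =>
          hnb (Finite.injective_iff_bijective.mp h)
        rw [Function.Injective] at hni
        push_neg at hni
        obtain ⟨s, t, hst, hne⟩ := hni
        have : (B.submatrix (pairFun φ) id).det = 0 :=
          det_zero_of_row_eq hne (funext fun v => by simp [hst])
        rw [this, mul_zero]
    _ = ∑ τ : Perm (Fin (2*n)),
          (∏ i, A (τ (p i)) (τ (q i))) * (B.submatrix τ id).det := by
        refine Finset.sum_bij
          (fun φ h => Equiv.ofBijective (pairFun φ) (mem_filter.1 h).2)
          (fun _ _ => mem_univ _) ?_ ?_ ?_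
        · intro φ hφ φ' hφ' h
          have hfun : pairFun φ = pairFun φ' := congrArg (fun (e : Equiv _ _) => ⇑e) h
          funext i
          have h1 := congrFun hfun (p i)
          have h2 := congrFun hfun (q i)
          rw [pairFun_p, pairFun_p] at h1
          rw [pairFun_q, pairFun_q] at h2
          exact Prod.ext h1 h2
        · intro τ _
          have key : ∀ x : Fin n × Fin 2,
              pairFun (fun i => (τ (p i), τ (q i))) (g x) = τ (g x) := by
            rintro ⟨i, r⟩
            revert r
            rw [Fin.forall_fin_two]
            exact ⟨by rw [g_p, pairFun_p], by rw [g_q, pairFun_q]⟩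
          have hfun : pairFun (fun i => (τ (p i), τ (q i))) = ⇑τ := funext fun t => by
            obtain ⟨x, rfl⟩ := g.surjective t; exact key x
          refine ⟨fun i => (τ (p i), τ (q i)),
            mem_filter.2 ⟨mem_univ _, by rw [hfun]; exact τ.bijective⟩, ?_⟩
          apply Equiv.coe_fn_injective
          exact hfun
        · intro φ hφ
          have h1 : ∀ i, (φ i).1 = (Equiv.ofBijective (pairFun φ) (mem_filter.1 hφ).2) (p i) := by
            intro i; rw [Equiv.ofBijective_apply, pairFun_p]
          have h2 : ∀ i, (φ i).2 = (Equiv.ofBijective (pairFun φ) (mem_filter.1 hφ).2) (q i) := by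
            intro i; rw [Equiv.ofBijective_apply, pairFun_q]
          simp only [← h1, ← h2]
          rfl
    _ = B.det * pfSum R A := by
        rw [pfSum, Finset.mul_sum]
        refine Finset.sum_congr rfl fun τ _ => ?_
        rw [det_permute]
        ring

variable (R) in
def Jmat (n : ℕ) : Matrix (Fin (2*n)) (Fin (2*n)) R := fun s t =>
  if (s:ℕ)+1 = t ∧ (s:ℕ) % 2 = 0 then 1
  else if (t:ℕ)+1 = s ∧ (t:ℕ) % 2 = 0 then -1 else 0

lemma Jmat_transpose : (Jmat R n)ᵀ = -(Jmat R n) := by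
  ext s t
  simp only [transpose_apply, Matrix.neg_apply, Jmat]
  split_ifs <;> first | (exfalso; omega) | ring1

def e : Fin 2 ⊕ Fin (2*n) ≃ Fin (2*(n+1)) where
  toFun := Sum.elim (fun k => ⟨k, by omega⟩) (fun j => ⟨(j:ℕ)+2, by omega⟩)
  invFun t := if h : (t:ℕ) < 2 then .inl ⟨t, h⟩ else .inr ⟨(t:ℕ)-2, by omega⟩
  left_inv := by
    rintro (k | j)
    · simp [k.isLt]
    · have : ¬ ((j:ℕ)+2 < 2) := by omega
      simp [this]
  right_inv := by
    intro t
    dsimp only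
    by_cases h : (t:ℕ) < 2
    · rw [dif_pos h]; rfl
    · rw [dif_neg h]
      exact Fin.ext (by simp; omega)

def J₂ : Matrix (Fin 2) (Fin 2) R := !![0, 1; -1, 0]

lemma J_block :
    Jmat R (n+1) = (fromBlocks J₂ 0 0 (Jmat R n)).submatrix e.symm e.symm := by
  have key : ∀ x y : Fin 2 ⊕ Fin (2*n),
      fromBlocks (J₂ (R := R)) 0 0 (Jmat R n) x y = Jmat R (n+1) (e x) (e y) := by
    rintro (k | j) (k' | j')
    · have h1 : 1 % (2 * (n + 1)) = 1 := Nat.mod_eq_of_lt (by omega)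
      fin_cases k <;> fin_cases k' <;>
        simp [fromBlocks, J₂, Jmat, e, h1] <;> norm_num
    · have hk := k.isLt
      have hj := j'.isLt
      dsimp only [fromBlocks, Sum.elim_inl, Sum.elim_inr, of_apply, Matrix.zero_apply, Jmat, e,
        Equiv.coe_fn_mk]
      split_ifs <;> first | (exfalso; omega) | ring1
    · have hk := k'.isLt
      have hj := j.isLt
      dsimp only [fromBlocks, Sum.elim_inl, Sum.elim_inr, of_apply, Matrix.zero_apply, Jmat, e,
        Equiv.coe_fn_mk]
      split_ifs <;> first | (exfalso; omega) | ring1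
    · dsimp only [fromBlocks, Sum.elim_inr, of_apply, Jmat, e, Equiv.coe_fn_mk]
      split_ifs <;> first | (exfalso; omega) | ring1
  ext s t
  rw [submatrix_apply, key, e.apply_symm_apply, e.apply_symm_apply]

lemma det_Jmat : (Jmat R n).det = 1 := by
  induction n with
  | zero => exact det_eq_one_of_card_eq_zero (by simp)
  | succ m ih =>
      rw [J_block, det_submatrix_equiv_self, det_fromBlocks_zero₂₁, ih, mul_one]
      simp [J₂, Matrix.det_fin_two]


section PfJ

lemma perm2 (τ : Perm (Fin 2)) :
    (τ 0 = 0 ∧ τ 1 = 1 ∧ Perm.sign τ = 1) ∨ (τ 0 = 1 ∧ τ 1 = 0 ∧ Perm.sign τ = -1) := by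
  revert τ
  decide

def Psi (x : Perm (Fin n) × (Fin n → Perm (Fin 2))) : Perm (Fin (2*n)) :=
  g.permCongr ((Equiv.prodCongrRight x.2).trans (Equiv.prodCongrLeft fun _ => x.1))

lemma Psi_p (x : Perm (Fin n) × (Fin n → Perm (Fin 2))) (i : Fin n) :
    Psi x (p i) = g (x.1 i, x.2 i 0) := by
  have h : g.symm (p i) = (i, 0) := by rw [← g_p i]; exact g.symm_apply_apply _
  simp [Psi, Equiv.permCongr_apply, Equiv.prodCongrLeft, Equiv.prodCongrRight, h]

lemma Psi_q (x : Perm (Fin n) × (Fin n → Perm (Fin 2))) (i : Fin n) :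
    Psi x (q i) = g (x.1 i, x.2 i 1) := by
  have h : g.symm (q i) = (i, 1) := by rw [← g_q i]; exact g.symm_apply_apply _
  simp [Psi, Equiv.permCongr_apply, Equiv.prodCongrLeft, Equiv.prodCongrRight, h]

lemma sign_Psi (x : Perm (Fin n) × (Fin n → Perm (Fin 2))) :
    Perm.sign (Psi x) = ∏ i, Perm.sign (x.2 i) := by
  rw [Psi, Equiv.Perm.sign_permCongr]
  have : (Equiv.prodCongrRight x.2).trans (Equiv.prodCongrLeft fun _ => x.1)
      = (Equiv.prodCongrLeft fun _ : Fin 2 => x.1) * (Equiv.prodCongrRight x.2) := rfl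
  rw [this, _root_.map_mul Perm.sign, Equiv.Perm.sign_prodCongrRight,
    Equiv.Perm.sign_prodCongrLeft]
  simp [Finset.prod_const, Int.units_sq]

lemma Psi_injective : Function.Injective (Psi (n := n)) := by
  intro x y h
  have hμ : (Equiv.prodCongrRight x.2).trans (Equiv.prodCongrLeft fun _ => x.1)
      = (Equiv.prodCongrRight y.2).trans (Equiv.prodCongrLeft fun _ => y.1) :=
    g.permCongr.injective h
  have key : ∀ (i : Fin n) (r : Fin 2), (x.1 i, x.2 i r) = (y.1 i, y.2 i r) := by
    intro i r
    have := congrArg (fun (e : Perm (Fin n × Fin 2)) => e (i, r)) hμ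
    simpa [Equiv.prodCongrLeft] using this
  have h1 : x.1 = y.1 := Equiv.ext fun i => congrArg Prod.fst (key i 0)
  have h2 : x.2 = y.2 := funext fun i => Equiv.ext fun r =>
    congrArg Prod.snd (key i r)
  exact Prod.ext h1 h2

lemma Jmat_term_eq_zero (σ : Perm (Fin (2*n))) (hσ : σ ∉ Finset.univ.image (Psi (n := n))) :
    ∃ i : Fin n, Jmat R n (σ (p i)) (σ (q i)) = 0 := by
  by_contra hc
  push_neg at hc
  -- extract the pairing structure
  have pat : ∀ i : Fin n,
      ((σ (p i) : ℕ) + 1 = σ (q i) ∧ (σ (p i) : ℕ) % 2 = 0) ∨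
      ((σ (q i) : ℕ) + 1 = σ (p i) ∧ (σ (q i) : ℕ) % 2 = 0) := by
    intro i
    by_contra hpat
    apply hc i
    rw [Jmat, if_neg (fun h => hpat (Or.inl h)), if_neg (fun h => hpat (Or.inr h))]
  have hlt : ∀ i : Fin n, (σ (p i) : ℕ)/2 < n := fun i => by
    have := (σ (p i)).isLt; omega
  set k : Fin n → Fin n := fun i => ⟨(σ (p i) : ℕ)/2, hlt i⟩ with hk
  have hvals : ∀ i : Fin n,
      ((σ (p i) : ℕ) = 2 * (k i) ∧ (σ (q i) : ℕ) = 2 * (k i) + 1) ∨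
      ((σ (p i) : ℕ) = 2 * (k i) + 1 ∧ (σ (q i) : ℕ) = 2 * (k i)) := by
    intro i
    rcases pat i with ⟨h1, h2⟩ | ⟨h1, h2⟩
    · left; constructor <;> simp [hk] <;> omega
    · right; constructor <;> simp [hk] <;> omega
  have kinj : Function.Injective k := by
    intro i i' hii
    have hi := hvals i
    have hi' := hvals i'
    rw [hii] at hi
    -- σ (p i) or σ (q i) agrees with σ (p i') or σ (q i')
    have : σ (p i) = σ (p i') ∨ σ (p i) = σ (q i') ∨ σ (q i) = σ (p i') := by
      rcases hi with ⟨h1, h2⟩ | ⟨h1, h2⟩ <;> rcases hi' with ⟨h1', h2'⟩ | ⟨h1', h2'⟩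
      · exact Or.inl (Fin.ext (by omega))
      · exact Or.inr (Or.inl (Fin.ext (by omega)))
      · exact Or.inr (Or.inl (Fin.ext (by omega)))
      · exact Or.inl (Fin.ext (by omega))
    have hpq : p i = p i' ∨ p i = q i' ∨ q i = p i' := by
      rcases this with h | h | h
      · exact Or.inl (σ.injective h)
      · exact Or.inr (Or.inl (σ.injective h))
      · exact Or.inr (Or.inr (σ.injective h))
    apply Fin.ext
    rcases hpq with h | h | h <;>
      · have := congrArg Fin.val h
        simp [p, q] at this
        omega
  apply hσ
  set π : Perm (Fin n) := Equiv.ofBijective k (Finite.injective_iff_bijective.mp kinj) with hπ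
  set ε : Fin n → Perm (Fin 2) :=
    (fun i => if (σ (p i) : ℕ) % 2 = 0 then 1 else Equiv.swap 0 1) with hε
  have hπv : ∀ i, π i = k i := fun i => rfl
  refine Finset.mem_image.2 ⟨(π, ε), Finset.mem_univ _, ?_⟩
  apply Equiv.ext
  intro t
  obtain ⟨⟨i, r⟩, rfl⟩ := g.surjective t
  have hv := hvals i
  revert r
  rw [Fin.forall_fin_two]
  constructor
  · rw [g_p, Psi_p]
    show g (π i, ε i 0) = σ (p i)
    rcases hv with ⟨h1, h2⟩ | ⟨h1, h2⟩
    · have hεi : ε i = 1 := by rw [hε]; exact if_pos (by omega)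
      rw [hεi, hπv]
      exact Fin.ext (by simp [g]; omega)
    · have hεi : ε i = Equiv.swap 0 1 := by rw [hε]; exact if_neg (by omega)
      rw [hεi, hπv]
      exact Fin.ext (by simp [g, Equiv.swap_apply_left]; omega)
  · rw [g_q, Psi_q]
    show g (π i, ε i 1) = σ (q i)
    rcases hv with ⟨h1, h2⟩ | ⟨h1, h2⟩
    · have hεi : ε i = 1 := by rw [hε]; exact if_pos (by omega)
      rw [hεi, hπv]
      exact Fin.ext (by simp [g]; omega)
    · have hεi : ε i = Equiv.swap 0 1 := by rw [hε]; exact if_neg (by omega)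
      rw [hεi, hπv]
      exact Fin.ext (by simp [g, Equiv.swap_apply_right]; omega)

lemma pfSum_Jmat : pfSum R (Jmat R n) = ((2^n * n.factorial : ℕ) : R) := by
  rw [pfSum]
  rw [← Finset.sum_subset (Finset.subset_univ (Finset.univ.image (Psi (n := n))))
    (fun σ _ hσ => ?_)]
  · rw [Finset.sum_image (fun x _ y _ h => Psi_injective h)]
    have term1 : ∀ x : Perm (Fin n) × (Fin n → Perm (Fin 2)),
        ((Perm.sign (Psi x) : ℤ) : R) * ∏ i, Jmat R n (Psi x (p i)) (Psi x (q i)) = 1 := by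
      intro x
      have hfac : ∀ i : Fin n,
          Jmat R n (Psi x (p i)) (Psi x (q i)) = ((Perm.sign (x.2 i) : ℤ) : R) := by
        intro i
        rw [Psi_p, Psi_q]
        rcases perm2 (x.2 i) with ⟨h0, h1, hs⟩ | ⟨h0, h1, hs⟩ <;> rw [h0, h1, hs]
        · rw [Jmat, if_pos (by constructor <;> simp [g] <;> omega)]
          simp
        · rw [Jmat, if_neg (by simp [g]), if_pos (by constructor <;> simp [g] <;> omega)]
          simp
      rw [sign_Psi]
      simp only [hfac]
      have hcast : ((↑(∏ i, Perm.sign (x.2 i)) : ℤ) : R)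
          = ∏ i, ((Perm.sign (x.2 i) : ℤ) : R) := by
        push_cast
        rfl
      rw [hcast, ← Finset.prod_mul_distrib]
      refine Finset.prod_eq_one fun i _ => ?_
      rw [← Int.cast_mul, ← Units.val_mul, Int.units_mul_self]
      simp
    rw [Finset.sum_congr rfl fun x _ => term1 x]
    simp [Fintype.card_prod, Fintype.card_perm, Fintype.card_fun, mul_comm]
  · obtain ⟨i, hi⟩ := Jmat_term_eq_zero (R := R) σ hσ
    rw [Finset.prod_eq_zero (Finset.mem_univ i) hi, mul_zero]

end PfJ


section Reduce

variable {F : Type*} [Field F]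

def Cong {ι : Type*} [Fintype ι] [DecidableEq ι] (A C : Matrix ι ι F) : Prop :=
  ∃ P : Matrix ι ι F, P.det ≠ 0 ∧ Pᵀ * A * P = C

lemma Cong.trans {ι : Type*} [Fintype ι] [DecidableEq ι] {A B C : Matrix ι ι F}
    (h1 : Cong A B) (h2 : Cong B C) : Cong A C := by
  obtain ⟨P, hP, hPe⟩ := h1
  obtain ⟨Q, hQ, hQe⟩ := h2
  refine ⟨P * Q, by simp [det_mul, hP, hQ], ?_⟩
  rw [transpose_mul, ← hQe, ← hPe]
  noncomm_ring

lemma Cong.det_ne_zero {ι : Type*} [Fintype ι] [DecidableEq ι] {A C : Matrix ι ι F}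
    (h : Cong A C) (hA : A.det ≠ 0) : C.det ≠ 0 := by
  obtain ⟨P, hP, hPe⟩ := h
  rw [← hPe]
  simp [det_mul, hP, hA]

lemma Cong.skew {ι : Type*} [Fintype ι] [DecidableEq ι] {A C : Matrix ι ι F}
    (h : Cong A C) (hA : Aᵀ = -A) : Cᵀ = -C := by
  obtain ⟨P, hP, hPe⟩ := h
  rw [← hPe, transpose_mul, transpose_mul, transpose_transpose, hA]
  noncomm_ring

lemma cong_perm {ι : Type*} [Fintype ι] [DecidableEq ι] (A : Matrix ι ι F) (τ : Perm ι) :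
    Cong A (A.submatrix τ τ) := by
  refine ⟨(1 : Matrix ι ι F).submatrix id τ, ?_, ?_⟩
  · rw [det_permute', det_one, mul_one]
    rcases Int.units_eq_one_or (Perm.sign τ) with h | h <;> rw [h] <;> norm_num
  · ext u v
    simp only [Matrix.mul_apply, transpose_apply, submatrix_apply, Matrix.one_apply, id_eq,
      ite_mul, one_mul, zero_mul, mul_ite, mul_one, mul_zero, Finset.sum_ite_eq,
      Finset.sum_ite_eq', Finset.mem_univ, if_true]

lemma cong_scale {ι : Type*} [Fintype ι] [DecidableEq ι] (A : Matrix ι ι F) (d : ι → F)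
    (hd : ∀ i, d i ≠ 0) : Cong A (Matrix.of fun u v => d u * A u v * d v) := by
  refine ⟨Matrix.diagonal d, by simp [Finset.prod_ne_zero_iff, hd], ?_⟩
  rw [Matrix.diagonal_transpose]
  ext u v
  simp [Matrix.mul_apply, Matrix.diagonal, Finset.sum_ite_eq, mul_ite, ite_mul]

lemma skew_diag_zero [CharZero F] {ι : Type*} [Fintype ι] [DecidableEq ι]
    {A : Matrix ι ι F} (hA : Aᵀ = -A) (u : ι) : A u u = 0 := by
  have h := congrFun (congrFun hA u) u
  simp only [transpose_apply, Matrix.neg_apply] at h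
  have h2 : (2 : F) * A u u = 0 := by linear_combination h
  rcases mul_eq_zero.mp h2 with h | h
  · exact absurd h (by norm_num)
  · exact h

lemma skew_apply {ι : Type*} [Fintype ι] [DecidableEq ι]
    {A : Matrix ι ι F} (hA : Aᵀ = -A) (u v : ι) : A v u = -A u v := by
  have h := congrFun (congrFun hA u) v
  simpa [transpose_apply, Matrix.neg_apply] using h

theorem cong_J [CharZero F] :
    ∀ n (A : Matrix (Fin (2*n)) (Fin (2*n)) F), Aᵀ = -A → A.det ≠ 0 →
      Cong A (Jmat F n) := by
  intro n
  induction n with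
  | zero =>
      intro A _ _
      refine ⟨1, by simp, ?_⟩
      haveI : IsEmpty (Fin (2*0)) := ⟨fun i => absurd i.isLt (by omega)⟩
      exact Subsingleton.elim _ _
  | succ n ih =>
      intro A hA hdet
      set i0 : Fin (2*(n+1)) := ⟨0, by omega⟩ with hi0
      set i1 : Fin (2*(n+1)) := ⟨1, by omega⟩ with hi1
      have hi01 : i0 ≠ i1 := by simp [hi0, hi1, Fin.ext_iff]
      -- Step 1: find j with A i0 j ≠ 0
      have hex : ∃ j, A i0 j ≠ 0 := by
        by_contra hno
        push_neg at hno
        exact hdet (det_eq_zero_of_row_eq_zero i0 hno)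
      obtain ⟨j, hj⟩ := hex
      have hji0 : j ≠ i0 := by
        intro h
        rw [h] at hj
        exact hj (skew_diag_zero hA i0)
      -- Step 2: swap j to position 1
      set τ : Perm (Fin (2*(n+1))) := Equiv.swap j i1 with hτ
      set A1 : Matrix _ _ F := A.submatrix τ τ with hA1
      have congA1 : Cong A A1 := cong_perm A τ
      have hA1skew : A1ᵀ = -A1 := congA1.skew hA
      have hA1v : A1 i0 i1 ≠ 0 := by
        have hτ0 : τ i0 = i0 := Equiv.swap_apply_of_ne_of_ne (Ne.symm hji0) hi01
        have hτ1 : τ i1 = j := Equiv.swap_apply_right j i1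
        simpa [hA1, submatrix_apply, hτ0, hτ1] using hj
      -- Step 3: scale to make entry 1
      set d : Fin (2*(n+1)) → F := fun u => if u = i1 then (A1 i0 i1)⁻¹ else 1 with hd
      have hdne : ∀ u, d u ≠ 0 := by
        intro u
        by_cases h : u = i1
        · simp [hd, h, inv_ne_zero hA1v]
        · simp [hd, h]
      set C : Matrix _ _ F := Matrix.of fun u v => d u * A1 u v * d v with hC
      have congC : Cong A C := congA1.trans (cong_scale A1 d hdne)
      have hCskew : Cᵀ = -C := congC.skew hA
      have hC01 : C i0 i1 = 1 := by
        have h0 : d i0 = 1 := by simp [hd, hi01]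
        have h1 : d i1 = (A1 i0 i1)⁻¹ := by simp [hd]
        simp only [hC, Matrix.of_apply, h0, h1]
        field_simp
      have hC10 : C i1 i0 = -1 := by rw [skew_apply hCskew, hC01]
      have hC00 : C i0 i0 = 0 := skew_diag_zero hCskew i0
      have hC11 : C i1 i1 = 0 := skew_diag_zero hCskew i1
      -- Step 4: clear first two rows/columns
      set x : Fin (2*(n+1)) → F := fun v => if v = i0 then 0 else C i1 v with hx
      set y : Fin (2*(n+1)) → F := fun v => if v = i1 then 0 else -(C i0 v) with hy
      have hxi0 : x i0 = 0 := by simp [hx]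
      have hxi1 : x i1 = 0 := by simp [hx, if_neg (Ne.symm hi01), hC11]
      have hyi0 : y i0 = 0 := by simp [hy, if_neg hi01, hC00]
      have hyi1 : y i1 = 0 := by simp [hy]
      have hxv : ∀ v, v ≠ i0 → x v = C i1 v := by intro v hv; simp [hx, hv]
      have hyv : ∀ v, v ≠ i1 → y v = -(C i0 v) := by intro v hv; simp [hy, hv]
      set N : Matrix (Fin (2*(n+1))) (Fin (2*(n+1))) F :=
        Matrix.of (fun u v => (if u = i0 then x v else 0) + (if u = i1 then y v else 0)) with hN
      set B3 : Matrix _ _ F := 1 + N with hB3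
      have hB3det : B3.det = 1 := by
        have htri : B3.BlockTriangular id := by
          intro u v huv
          simp only [id_eq] at huv
          have hne : u ≠ v := ne_of_gt huv
          simp only [hB3, Matrix.add_apply, Matrix.one_apply_ne hne, hN, Matrix.of_apply,
            zero_add]
          by_cases h1 : u = i0
          · exfalso
            rw [h1] at huv
            have := huv
            rw [Fin.lt_def] at this
            simp [hi0] at this
          · rw [if_neg h1]
            by_cases h2 : u = i1
            · have hv : v = i0 := by
                have hm : 1 % (2 * (n + 1)) = 1 := Nat.mod_eq_of_lt (by omega)
                rw [h2, Fin.lt_def] at huv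
                apply Fin.ext
                simp [hi1, hm] at huv
                simp [hi0]
                omega
              rw [if_pos h2, hv, hyi0, add_zero]
            · rw [if_neg h2, add_zero]
        rw [det_of_upperTriangular htri]
        refine Finset.prod_eq_one fun u _ => ?_
        have hNuu : N u u = 0 := by
          simp only [hN, Matrix.of_apply]
          by_cases h1 : u = i0
          · subst h1
            rw [if_pos rfl, if_neg hi01, hxi0, add_zero]
          · rw [if_neg h1]
            by_cases h2 : u = i1
            · rw [if_pos h2, h2, hyi1, zero_add]
            · rw [if_neg h2, add_zero]
        simp [hB3, Matrix.add_apply, Matrix.one_apply_eq, hNuu]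
      have hmulN : ∀ (M : Matrix (Fin (2*(n+1))) (Fin (2*(n+1))) F) u v,
          (M * N) u v = M u i0 * x v + M u i1 * y v := by
        intro M u v
        rw [Matrix.mul_apply]
        simp only [hN, Matrix.of_apply, mul_add, mul_ite, mul_zero]
        rw [Finset.sum_add_distrib, Finset.sum_ite_eq', Finset.sum_ite_eq']
        simp
      have hNTmul : ∀ (M : Matrix (Fin (2*(n+1))) (Fin (2*(n+1))) F) u v,
          (Nᵀ * M) u v = x u * M i0 v + y u * M i1 v := by
        intro M u v
        rw [Matrix.mul_apply]
        simp only [transpose_apply, hN, Matrix.of_apply, add_mul, ite_mul, zero_mul]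
        rw [Finset.sum_add_distrib, Finset.sum_ite_eq', Finset.sum_ite_eq']
        simp
      set A4 : Matrix _ _ F := B3ᵀ * C * B3 with hA4
      have congA4 : Cong A A4 := congC.trans ⟨B3, by rw [hB3det]; norm_num, rfl⟩
      have hA4skew : A4ᵀ = -A4 := congA4.skew hA
      have hA4exp : A4 = C + C*N + Nᵀ*C + Nᵀ*(C*N) := by
        rw [hA4, hB3, transpose_add, transpose_one]
        noncomm_ring
      have hA4row0 : ∀ v, A4 i0 v = C i0 v + y v := by
        intro v
        rw [hA4exp]
        simp only [Matrix.add_apply]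
        rw [hmulN C, hNTmul C, hNTmul (C * N), hmulN C, hxi0, hyi0, hC00, hC01]
        ring
      have hA4row1 : ∀ v, A4 i1 v = C i1 v - x v := by
        intro v
        rw [hA4exp]
        simp only [Matrix.add_apply]
        rw [hmulN C, hNTmul C, hNTmul (C * N), hmulN C, hxi1, hyi1, hC10, hC11]
        ring
      have hA401 : A4 i0 i1 = 1 := by rw [hA4row0, hyi1, hC01, add_zero]
      have hA400 : A4 i0 i0 = 0 := skew_diag_zero hA4skew i0
      have hA411 : A4 i1 i1 = 0 := skew_diag_zero hA4skew i1
      have hA410 : A4 i1 i0 = -1 := by rw [skew_apply hA4skew, hA401]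
      have hA40v : ∀ v, v ≠ i0 → v ≠ i1 → A4 i0 v = 0 := by
        intro v hv0 hv1
        rw [hA4row0, hyv v hv1]
        ring
      have hA41v : ∀ v, v ≠ i0 → v ≠ i1 → A4 i1 v = 0 := by
        intro v hv0 hv1
        rw [hA4row1, hxv v hv0]
        ring
      -- block decomposition
      set D : Matrix (Fin (2*n)) (Fin (2*n)) F :=
        Matrix.of (fun i j => A4 (e (Sum.inr i)) (e (Sum.inr j))) with hD
      have he0 : e (Sum.inl 0) = i0 := by
        apply Fin.ext; simp [e, hi0]
      have he1 : e (Sum.inl 1) = i1 := by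
        apply Fin.ext; simp [e, hi1]
      have heinr0 : ∀ j : Fin (2*n), e (Sum.inr j) ≠ i0 := by
        intro j h
        have := congrArg Fin.val h
        simp [e, hi0] at this
      have heinr1 : ∀ j : Fin (2*n), e (Sum.inr j) ≠ i1 := by
        intro j h
        have := congrArg Fin.val h
        simp [e, hi1] at this
        have hm : 1 % (2 * (n + 1)) = 1 := Nat.mod_eq_of_lt (by omega)
        omega
      have hblockkey : ∀ xx yy, fromBlocks (J₂ (R := F)) 0 0 D xx yy = A4 (e xx) (e yy) := by
        rintro (k | jj) (k' | jj')
        · revert k k'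
          simp only [Fin.forall_fin_two]
          refine ⟨⟨?_, ?_⟩, ?_, ?_⟩ <;>
            simp only [fromBlocks, Sum.elim_inl, of_apply]
          · rw [he0, hA400]; simp [J₂]
          · rw [he0, he1, hA401]; simp [J₂]
          · rw [he0, he1, hA410]; simp [J₂]
          · rw [he1, hA411]; simp [J₂]
        · revert k
          simp only [Fin.forall_fin_two]
          constructor <;>
            simp only [fromBlocks, Sum.elim_inl, Sum.elim_inr, of_apply, Matrix.zero_apply]
          · rw [he0, hA40v _ (heinr0 jj') (heinr1 jj')]
          · rw [he1, hA41v _ (heinr0 jj') (heinr1 jj')]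
        · revert k'
          simp only [Fin.forall_fin_two]
          constructor <;>
            simp only [fromBlocks, Sum.elim_inl, Sum.elim_inr, of_apply, Matrix.zero_apply]
          · rw [he0, skew_apply hA4skew, hA40v _ (heinr0 jj) (heinr1 jj), neg_zero]
          · rw [he1, skew_apply hA4skew, hA41v _ (heinr0 jj) (heinr1 jj), neg_zero]
        · rfl
      have hblock : A4 = (fromBlocks (J₂ (R := F)) 0 0 D).submatrix e.symm e.symm := by
        refine Matrix.ext fun s t => ?_
        rw [submatrix_apply, hblockkey, e.apply_symm_apply, e.apply_symm_apply]
      have hDskew : Dᵀ = -D := by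
        refine Matrix.ext fun i j => ?_
        simp only [transpose_apply, Matrix.neg_apply, hD, Matrix.of_apply]
        exact skew_apply hA4skew _ _
      have hA4det : A4.det ≠ 0 := congA4.det_ne_zero hdet
      have hDdet : D.det ≠ 0 := by
        rw [hblock, det_submatrix_equiv_self, det_fromBlocks_zero₂₁] at hA4det
        have hJ2 : (J₂ (R := F)).det = 1 := by simp [J₂, Matrix.det_fin_two]
        rw [hJ2, one_mul] at hA4det
        exact hA4det
      obtain ⟨B', hB'det, hB'⟩ := ih D hDskew hDdet
      refine congA4.trans ⟨(fromBlocks 1 0 0 B').submatrix e.symm e.symm, ?_, ?_⟩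
      · rw [det_submatrix_equiv_self, det_fromBlocks_zero₂₁, det_one, one_mul]
        exact hB'det
      · rw [hblock, transpose_submatrix, fromBlocks_transpose, transpose_zero, transpose_zero,
          transpose_one, submatrix_mul_equiv, submatrix_mul_equiv, fromBlocks_multiply,
          fromBlocks_multiply]
        simp only [Matrix.mul_zero, Matrix.zero_mul, Matrix.mul_one, Matrix.one_mul,
          add_zero, zero_add]
        rw [J_block, hB']

end Reduce


lemma pfaffian_eq {R : Type*} [CommRing R] [Algebra ℚ R] {n : ℕ}
    (A : Matrix (Fin (2*n)) (Fin (2*n)) R) :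
    pfaffian A = algebraMap ℚ R (1 / (2 ^ n * n.factorial)) * pfSum R A := rfl

lemma pfaffian_conj {R : Type*} [CommRing R] [Algebra ℚ R] {n : ℕ}
    (A B : Matrix (Fin (2*n)) (Fin (2*n)) R) :
    pfaffian (Bᵀ * A * B) = B.det * pfaffian A := by
  rw [pfaffian_eq, pfaffian_eq, pfSum_conj]
  ring

lemma pfaffian_Jmat {R : Type*} [CommRing R] [Algebra ℚ R] {n : ℕ} :
    pfaffian (Jmat R n) = 1 := by
  rw [pfaffian_eq, pfSum_Jmat]
  have h1 : ((2^n * n.factorial : ℕ) : R)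
      = algebraMap ℚ R ((2^n * n.factorial : ℕ) : ℚ) := by rw [map_natCast]
  rw [h1, ← _root_.map_mul]
  have h2 : (1 / (2 ^ n * (n.factorial : ℚ))) * ((2^n * n.factorial : ℕ) : ℚ) = 1 := by
    have hne : (2 ^ n * (n.factorial : ℚ)) ≠ 0 := by
      positivity
    push_cast
    field_simp
  rw [h2, _root_.map_one]

lemma pfaffian_map {R S : Type*} [CommRing R] [CommRing S] [Algebra ℚ R] [Algebra ℚ S]
    (f : R →ₐ[ℚ] S) {n : ℕ} (A : Matrix (Fin (2*n)) (Fin (2*n)) R) :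
    f (pfaffian A) = pfaffian (A.map f) := by
  rw [pfaffian_eq, pfaffian_eq, _root_.map_mul, AlgHom.commutes]
  congr 1
  rw [pfSum, pfSum, map_sum]
  refine Finset.sum_congr rfl fun σ _ => ?_
  rw [_root_.map_mul, map_prod]
  congr 1
  rw [map_intCast]

lemma pf_sq_of_field {K : Type*} [Field K] [Algebra ℚ K] {n : ℕ}
    (A : Matrix (Fin (2*n)) (Fin (2*n)) K) (hA : Aᵀ = -A) (hdet : A.det ≠ 0) :
    pfaffian A ^ 2 = A.det := by
  haveI : CharZero K := charZero_of_injective_algebraMap (algebraMap ℚ K).injective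
  obtain ⟨B, hBdet, hBe⟩ := cong_J n A hA hdet
  have h1 : B.det * pfaffian A = 1 := by
    have := pfaffian_conj A B
    rw [hBe, pfaffian_Jmat] at this
    exact this.symm
  have h2 : B.det ^ 2 * A.det = 1 := by
    have := congrArg Matrix.det hBe
    rw [det_mul, det_mul, det_transpose, det_Jmat] at this
    rw [← this]
    ring
  have key : B.det ^ 2 * pfaffian A ^ 2 = B.det ^ 2 * A.det := by
    calc B.det ^ 2 * pfaffian A ^ 2 = (B.det * pfaffian A) ^ 2 := by ring
    _ = 1 := by rw [h1]; ring
    _ = B.det ^ 2 * A.det := h2.symm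
  exact mul_left_cancel₀ (pow_ne_zero 2 hBdet) key

section Generic

variable (n : ℕ)

abbrev ST := {pr : Fin (2*n) × Fin (2*n) // pr.1 < pr.2}

noncomputable def Xg : Matrix (Fin (2*n)) (Fin (2*n)) (MvPolynomial (ST n) ℚ) :=
  Matrix.of fun i j =>
    if h : i < j then MvPolynomial.X ⟨(i,j), h⟩
    else if h' : j < i then -MvPolynomial.X ⟨(j,i), h'⟩ else 0

lemma Xg_skew : (Xg n)ᵀ = -(Xg n) := by
  refine Matrix.ext fun i j => ?_
  simp only [transpose_apply, Matrix.neg_apply, Xg, Matrix.of_apply]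
  rcases lt_trichotomy i j with h | h | h
  · rw [dif_neg (asymm h), dif_pos h, dif_pos h]
  · subst h
    rw [dif_neg (lt_irrefl i), dif_neg (lt_irrefl i), neg_zero]
  · rw [dif_pos h, dif_neg (asymm h), dif_pos h, neg_neg]

lemma Xg_map {R : Type*} [CommRing R] [Algebra ℚ R]
    (A : Matrix (Fin (2*n)) (Fin (2*n)) R) (hA : Aᵀ = -A) :
    (Xg n).map (MvPolynomial.aeval fun s : ST n => A s.1.1 s.1.2) = A := by
  have hsk : ∀ u v, A v u = -A u v := fun u v => by
    have h := congrFun (congrFun hA u) v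
    simpa using h
  have hdiag : ∀ i, A i i = 0 := by
    intro i
    have h2 : A i i + A i i = 0 := by
      nth_rewrite 1 [hsk i i]
      ring
    have h3 : (1/2 : ℚ) • (A i i + A i i) = A i i := by
      rw [smul_add, ← add_smul]
      norm_num
    rw [← h3, h2, smul_zero]
  refine Matrix.ext fun i j => ?_
  simp only [Matrix.map_apply, Xg, Matrix.of_apply]
  rcases lt_trichotomy i j with h | h | h
  · rw [dif_pos h, MvPolynomial.aeval_X]
  · subst h
    rw [dif_neg (lt_irrefl i), dif_neg (lt_irrefl i), map_zero, hdiag]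
  · rw [dif_neg (asymm h), dif_pos h, map_neg, MvPolynomial.aeval_X, ← hsk]

lemma Xg_pf_sq : pfaffian (Xg n) ^ 2 = (Xg n).det := by
  set R0 := MvPolynomial (ST n) ℚ with hR0
  let K := FractionRing R0
  haveI : CharZero K := charZero_of_injective_algebraMap (IsFractionRing.injective R0 K)
  let φ : R0 →ₐ[ℚ] K :=
    { algebraMap R0 K with
      commutes' := fun q => by
        have h1 := eq_ratCast ((algebraMap R0 K).comp (algebraMap ℚ R0)) q
        have h2 := eq_ratCast (algebraMap ℚ K) q
        simpa using h1.trans h2.symm }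
  have hφinj : Function.Injective φ := IsFractionRing.injective R0 K
  set X' := (Xg n).map φ with hX'
  have hX'skew : X'ᵀ = -X' := by
    refine Matrix.ext fun i j => ?_
    have h := congrFun (congrFun (Xg_skew n) i) j
    simp only [transpose_apply, Matrix.neg_apply] at h ⊢
    simp [hX', Matrix.map_apply, h]
  have hdetX : (Xg n).det ≠ 0 := by
    intro h0
    have h1 : (MvPolynomial.aeval fun s : ST n => Jmat ℚ n s.1.1 s.1.2) (Xg n).det = 0 := by
      rw [h0, map_zero]
    rw [AlgHom.map_det, AlgHom.mapMatrix_apply, Xg_map n (Jmat ℚ n) Jmat_transpose, det_Jmat] at h1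
    exact one_ne_zero h1
  have hX'det : X'.det ≠ 0 := by
    have hd : X'.det = φ (Xg n).det := by
      rw [hX', ← AlgHom.mapMatrix_apply, ← AlgHom.map_det]
    rw [hd]
    intro h
    exact hdetX (hφinj (by rw [h, map_zero]))
  have hfield := pf_sq_of_field X' hX'skew hX'det
  apply hφinj
  rw [map_pow, pfaffian_map φ, AlgHom.map_det, AlgHom.mapMatrix_apply]
  exact hfield

end Generic

end PfAux

/-- For a skew-symmetric `2n × 2n` matrix `A`, `Pf(A)² = det A`. -/
theorem pfaffian_sq_eq_det {R : Type*} [CommRing R] [Algebra ℚ R] {n : ℕ}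
    (A : Matrix (Fin (2 * n)) (Fin (2 * n)) R) (hA : A.transpose = -A) :
    pfaffian A ^ 2 = A.det := by
  set χ : MvPolynomial (PfAux.ST n) ℚ →ₐ[ℚ] R :=
    MvPolynomial.aeval fun s : PfAux.ST n => A s.1.1 s.1.2 with hχ
  have hmap : (PfAux.Xg n).map χ = A := PfAux.Xg_map n A hA
  calc pfaffian A ^ 2 = pfaffian ((PfAux.Xg n).map χ) ^ 2 := by rw [hmap]
  _ = (χ (pfaffian (PfAux.Xg n))) ^ 2 := by rw [PfAux.pfaffian_map]
  _ = χ (pfaffian (PfAux.Xg n) ^ 2) := by rw [map_pow]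
  _ = χ ((PfAux.Xg n).det) := by rw [PfAux.Xg_pf_sq]
  _ = ((PfAux.Xg n).map χ).det := by rw [AlgHom.map_det, AlgHom.mapMatrix_apply]
  _ = A.det := by rw [hmap]
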